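/- Let W be a regular wreath-like product of groups A and B with canonical homomorphism ε: W → B, and identify A with the subgroup A_1 of the base. Let N be a normal subgroup of A. Then: (i) for every b ∈ B, the subgroup uNu⁻¹ of W is independent of the choice of the element u ∈ W with ε(u) = b (call this subgroup N_b); and (ii) the normal closure ⟪N⟫ of N in W is the internal direct sum of the family (N_b)_{b∈B}, i.e., the N_b pairwise commute elementwise, form an independent family of subgroups, and generate ⟪N⟫. -/

import Mathlib

private lemma conj_map_map {W : Type*} [Group W] (u v : W) (H : Subgroup W) :
    Subgroup.map (MulAut.conj u).toMonoidHom
      (Subgroup.map (MulAut.conj v).toMonoidHom H)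
      = Subgroup.map (MulAut.conj (u * v)).toMonoidHom H := by
  rw [Subgroup.map_map]
  congr 1
  ext x
  simp only [MonoidHom.comp_apply, MulEquiv.coe_toMonoidHom, MulAut.conj_apply]
  group


/-- `W` is a wreath-like product of `A` and `B` corresponding to the action of `B` on `I`
(written `W ∈ WR(A, B ↷ I)`): it comes with a family of subgroups `𝒜 i`, each isomorphic
to `A`, which pairwise commute elementwise, form an independent family, and generate the
kernel of the surjective canonical homomorphism `ε : W → B` (so their internal direct sum
is the base `ker ε`), and conjugation by `w ∈ W` carries `𝒜 i` onto `𝒜 (ε w • i)`.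
A regular wreath-like product of `A` and `B` is the case `I = B` with the left
translation action of `B` on itself. -/
structure IsWreathLikeProduct (W A B I : Type*) [Group W] [Group A] [Group B]
    [MulAction B I] (𝒜 : I → Subgroup W) (ε : W →* B) : Prop where
  surjective : Function.Surjective ε
  isoA : ∀ i : I, Nonempty (𝒜 i ≃* A)
  commute : ∀ i j : I, i ≠ j → ∀ x ∈ 𝒜 i, ∀ y ∈ 𝒜 j, Commute x y
  indep : ∀ i : I, Disjoint (𝒜 i) (⨆ (j : I) (_ : j ≠ i), 𝒜 j)
  base_eq : (⨆ i : I, 𝒜 i) = ε.ker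
  conj_eq : ∀ (w : W) (i : I),
    Subgroup.map (MulAut.conj w).toMonoidHom (𝒜 i) = 𝒜 (ε w • i)

/-- Let `W` be a regular wreath-like product of `A` and `B`, identify `A`
with `𝒜 1`, and let `N` be a normal subgroup of `A = 𝒜 1`. Then:
(i) for `u, u' ∈ W` with `ε u = ε u'` we have `uNu⁻¹ = u'Nu'⁻¹`, so for `b ∈ B` the
subgroup `N_b = uNu⁻¹` (for any `u` with `ε u = b`) is well defined; and
(ii) for any choice `σ : B → W` of preimages (`ε (σ b) = b`), the family
`N_b = (σ b) N (σ b)⁻¹` pairwise commutes elementwise, is independent, and generates the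
normal closure `⟪N⟫` of `N` in `W`, i.e. `⟪N⟫` is the internal direct sum of the `N_b`. -/
theorem normalClosure_eq_directSum_of_conjugates
    {W A B : Type*} [Group W] [Group A] [Group B]
    (𝒜 : B → Subgroup W) (ε : W →* B)
    (hW : IsWreathLikeProduct W A B B 𝒜 ε)
    (N : Subgroup W) (hN : N ≤ 𝒜 (1 : B))
    (hNnormal : ∀ a ∈ 𝒜 (1 : B), ∀ n ∈ N, a * n * a⁻¹ ∈ N) :
    (∀ u u' : W, ε u = ε u' →
      Subgroup.map (MulAut.conj u).toMonoidHom N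
        = Subgroup.map (MulAut.conj u').toMonoidHom N)
    ∧ ∀ σ : B → W, (∀ b : B, ε (σ b) = b) →
        (∀ b c : B, b ≠ c →
          ∀ x ∈ Subgroup.map (MulAut.conj (σ b)).toMonoidHom N,
          ∀ y ∈ Subgroup.map (MulAut.conj (σ c)).toMonoidHom N, Commute x y)
        ∧ (∀ b : B, Disjoint (Subgroup.map (MulAut.conj (σ b)).toMonoidHom N)
            (⨆ (c : B) (_ : c ≠ b), Subgroup.map (MulAut.conj (σ c)).toMonoidHom N))
        ∧ (⨆ b : B, Subgroup.map (MulAut.conj (σ b)).toMonoidHom N)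
            = Subgroup.normalClosure (N : Set W) := by
  obtain ⟨hsurj, hiso, hcomm, hindep, hbase, hconj⟩ := hW
  -- the kernel of ε normalizes N
  have hnorm : ε.ker ≤ Subgroup.normalizer (N : Set W) := by
    rw [← hbase]
    refine iSup_le fun i => ?_
    by_cases hi : i = 1
    · subst hi
      intro a ha
      rw [Subgroup.mem_normalizer_iff]
      intro n
      constructor
      · exact fun h => hNnormal a ha n h
      · intro h
        have := hNnormal a⁻¹ (Subgroup.inv_mem _ ha) _ h
        simpa [mul_assoc] using this
    · intro a ha
      rw [Subgroup.mem_normalizer_iff]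
      intro n
      constructor
      · intro h
        have hc : Commute a n := hcomm i 1 hi a ha n (hN h)
        have : a * n * a⁻¹ = n := by rw [hc.eq]; group
        rw [this]; exact h
      · intro h
        have hc : Commute a (a * n * a⁻¹) := hcomm i 1 hi a ha _ (hN h)
        have h1 : a * (a * n * a⁻¹) = a * n := by rw [hc.eq]; group
        have h2 : a * n * a⁻¹ = n := mul_left_cancel h1
        exact h2 ▸ h
  have hker : ∀ k : W, ε k = 1 →
      Subgroup.map (MulAut.conj k).toMonoidHom N = N := by
    intro k hk
    have hk' : k ∈ Subgroup.normalizer (N : Set W) := hnorm (MonoidHom.mem_ker.mpr hk)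
    have hki : k⁻¹ ∈ Subgroup.normalizer (N : Set W) := Subgroup.inv_mem _ hk'
    ext x
    simp only [Subgroup.mem_map, MulEquiv.coe_toMonoidHom, MulAut.conj_apply]
    constructor
    · rintro ⟨n, hn, rfl⟩
      exact (Subgroup.mem_normalizer_iff.mp hk' n).mp hn
    · intro hx
      refine ⟨k⁻¹ * x * k, ?_, by group⟩
      have := (Subgroup.mem_normalizer_iff.mp hki x).mp hx
      simpa using this
  have part1 : ∀ u u' : W, ε u = ε u' →
      Subgroup.map (MulAut.conj u).toMonoidHom N
        = Subgroup.map (MulAut.conj u').toMonoidHom N := by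
    intro u u' h
    have key : Subgroup.map (MulAut.conj u').toMonoidHom
        (Subgroup.map (MulAut.conj (u'⁻¹ * u)).toMonoidHom N)
        = Subgroup.map (MulAut.conj u).toMonoidHom N := by
      rw [conj_map_map]
      congr 2
      group
    rw [← key, hker (u'⁻¹ * u) (by simp [h])]
  refine ⟨part1, fun σ hσ => ?_⟩
  have hle : ∀ b : B, Subgroup.map (MulAut.conj (σ b)).toMonoidHom N ≤ 𝒜 b := by
    intro b
    calc Subgroup.map (MulAut.conj (σ b)).toMonoidHom N
        ≤ Subgroup.map (MulAut.conj (σ b)).toMonoidHom (𝒜 1) := Subgroup.map_mono hN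
      _ = 𝒜 (ε (σ b) • (1 : B)) := hconj (σ b) 1
      _ = 𝒜 b := by rw [hσ b, smul_eq_mul, mul_one]
  refine ⟨fun b c hbc x hx y hy => hcomm b c hbc x (hle b hx) y (hle c hy),
    fun b => (hindep b).mono (hle b)
      (iSup_mono fun c => iSup_mono fun _ => hle c), ?_⟩
  set S := ⨆ b : B, Subgroup.map (MulAut.conj (σ b)).toMonoidHom N with hS
  have hmapS : ∀ g : W, Subgroup.map (MulAut.conj g).toMonoidHom S ≤ S := by
    intro g
    rw [hS, Subgroup.map_iSup]
    refine iSup_le fun b => ?_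
    rw [conj_map_map, part1 (g * σ b) (σ (ε g * b)) (by simp [hσ])]
    exact le_iSup (fun b => Subgroup.map (MulAut.conj (σ b)).toMonoidHom N) (ε g * b)
  haveI hSnormal : S.Normal := by
    constructor
    intro n hn g
    have : (MulAut.conj g).toMonoidHom n ∈ Subgroup.map (MulAut.conj g).toMonoidHom S :=
      Subgroup.mem_map.mpr ⟨n, hn, rfl⟩
    simpa using hmapS g this
  have hNS : (N : Set W) ⊆ S := by
    intro x hx
    have : x ∈ Subgroup.map (MulAut.conj (σ 1)).toMonoidHom N := by
      rw [hker (σ 1) (hσ 1)]; exact hx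
    exact le_iSup (fun b => Subgroup.map (MulAut.conj (σ b)).toMonoidHom N) 1 this
  refine le_antisymm (iSup_le fun b => ?_) (Subgroup.normalClosure_le_normal hNS)
  rintro x ⟨n, hn, rfl⟩
  have hnc : n ∈ Subgroup.normalClosure (N : Set W) := Subgroup.subset_normalClosure hn
  simpa using Subgroup.normalClosure_normal.conj_mem n hnc (σ b)
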